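/- Mode-n t-rank via the Hot-SVD core: let A ∈ ℂ_p^{I₁×⋯×I_N} be a tubal tensor of order N, for each n let A_(n) = U_n * Σ_n * V_n^H be a t-SVD of the mode-n unfolding, and set S := A *₁ U₁^H *₂ U₂^H ⋯ *_N U_N^H. Then for each n, the number of nonzero tubal scalars on the diagonal of Σ_n equals the number of indices α ∈ {1,…,I_n} for which the α-th row tubal vector of S_(n) is nonzero (equivalently, for which the subtensor S_{i_n=α} is nonzero). -/

import Mathlib

/-!
STATEMENT 12: Mode-n t-rank via the Hot-SVD core: if A_(n) = U_n * Σ_n * V_n^H is a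
t-SVD of each mode-n unfolding and S := A *₁ U₁^H ⋯ *_N U_N^H, then for each n the
number of nonzero tubal scalars on the diagonal of Σ_n equals the number of indices α
for which the α-th row tubal vector of S_(n) (equivalently the subtensor S_{i_n=α})
is nonzero.
-/

open scoped BigOperators

/-- Tubal scalars of length `p`: vectors in `ℂ^p`. -/
abbrev TubalScalar (p : ℕ) := Fin p → ℂ

variable {p : ℕ}

/-- Tensor-tensor product of tubal scalars with respect to the invertible
linear transformation `L`: `a * b := L⁻¹(L a ⊙ L b)`. -/
noncomputable def tmul (L : TubalScalar p ≃ₗ[ℂ] TubalScalar p) (a b : TubalScalar p) :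
    TubalScalar p :=
  L.symm (L a * L b)

/-- Tensor-tensor product of tubal matrices: `(A*B)(i,k) := Σ_j A(i,j)*B(j,k)`. -/
noncomputable def tMul {I J K : Type*} [Fintype J] (L : TubalScalar p ≃ₗ[ℂ] TubalScalar p)
    (A : I → J → TubalScalar p) (B : J → K → TubalScalar p) : I → K → TubalScalar p :=
  fun i k => ∑ j, tmul L (A i j) (B j k)

/-- The `n`-mode product of a tubal tensor `A` of shape `I : Fin N → ℕ` with a tubal
matrix `U ∈ ℂ_p^{J×I_n}`:
`(A *_n U)(i₁,…,i_{n−1},j,i_{n+1},…,i_N) = Σ_{i_n} A(i₁,…,i_N)*U(j,i_n)`. -/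
noncomputable def modeProd {N : ℕ} (L : TubalScalar p ≃ₗ[ℂ] TubalScalar p) (I : Fin N → ℕ)
    (A : ((m : Fin N) → Fin (I m)) → TubalScalar p) (n : Fin N) (J : ℕ)
    (U : Fin J → Fin (I n) → TubalScalar p) :
    ((m : Fin N) → Fin (Function.update I n J m)) → TubalScalar p :=
  fun idx => ∑ i : Fin (I n),
    tmul L
      (A fun m =>
        if h : m = n then Fin.cast (congrArg I h).symm i
        else Fin.cast (by rw [Function.update_of_ne h]) (idx m))
      (U (Fin.cast (by rw [Function.update_self]) (idx n)) i)

/-- The column index type of the mode-`n` unfolding: tuples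
`(i₁,…,i_{n−1},i_{n+1},…,i_N)` ranging over all modes other than `n`. -/
abbrev Cidx {N : ℕ} (I : Fin N → ℕ) (n : Fin N) :=
  (m : {m : Fin N // m ≠ n}) → Fin (I m.1)

/-- Insert the value `a` at position `n` into a tuple `c` over the remaining modes,
producing a full multi-index `(i₁,…,i_{n−1},a,i_{n+1},…,i_N)`. -/
def insertAt {N : ℕ} {I : Fin N → ℕ} (n : Fin N) (a : Fin (I n)) (c : Cidx I n) :
    (m : Fin N) → Fin (I m) :=
  fun m => if h : m = n then Fin.cast (congrArg I h).symm a else c ⟨m, h⟩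

/-- The mode-`n` unfolding of a tubal tensor: the tubal matrix with rows indexed by
`i_n`, columns indexed by the tuples over the remaining modes, and entry
`A_(n)(i_n,(i₁,…,i_{n−1},i_{n+1},…,i_N)) = A(i₁,…,i_N)`. -/
def unfold {N : ℕ} (I : Fin N → ℕ) (A : ((m : Fin N) → Fin (I m)) → TubalScalar p)
    (n : Fin N) : Fin (I n) → Cidx I n → TubalScalar p :=
  fun a c => A (insertAt n a c)

/-- The full multilinear tubal product `S *₁ U₁ *₂ U₂ ⋯ *_N U_N`, given entrywise by
`(S *₁ U₁ ⋯ *_N U_N)(i₁,…,i_N) = Σ_{j₁,…,j_N} S(j₁,…,j_N)*U₁(i₁,j₁)*⋯*U_N(i_N,j_N)`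
(the tensor-tensor products of the tubal scalars are computed via `L`). -/
noncomputable def multiProd {N : ℕ} (L : TubalScalar p ≃ₗ[ℂ] TubalScalar p)
    (I J : Fin N → ℕ) (S : ((m : Fin N) → Fin (I m)) → TubalScalar p)
    (U : (n : Fin N) → Fin (J n) → Fin (I n) → TubalScalar p) :
    ((m : Fin N) → Fin (J m)) → TubalScalar p :=
  fun idx => ∑ jdx : (m : Fin N) → Fin (I m),
    L.symm (L (S jdx) * ∏ n : Fin N, L (U n (idx n) (jdx n)))
/-- Hermitian transpose: `(L(A^H))^{(k)} = (L(A)^{(k)})^H`, i.e. entrywise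
`A^H(j,i) = L⁻¹(conj(L(A(i,j))))`. -/
noncomputable def tHerm {I J : Type*} (L : TubalScalar p ≃ₗ[ℂ] TubalScalar p)
    (A : I → J → TubalScalar p) : J → I → TubalScalar p :=
  fun j i => L.symm (star (L (A i j)))

/-- The identity tubal matrix: `e = L⁻¹((1,…,1))` on the diagonal, zero elsewhere. -/
noncomputable def tId {I : Type*} [DecidableEq I] (L : TubalScalar p ≃ₗ[ℂ] TubalScalar p) :
    I → I → TubalScalar p :=
  fun i j => if i = j then L.symm 1 else 0

/-- A square tubal matrix is unitary if `A*A^H = A^H*A = 𝓘`. -/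
noncomputable def tUnitary {I : Type*} [Fintype I] [DecidableEq I]
    (L : TubalScalar p ≃ₗ[ℂ] TubalScalar p) (A : I → I → TubalScalar p) : Prop :=
  tMul L A (tHerm L A) = tId L ∧ tMul L (tHerm L A) A = tId L

/-- The `i`-th diagonal tubal scalar of a (possibly rectangular) tubal matrix,
taken to be `0` when the diagonal position does not exist. -/
noncomputable def sdiag {a b : ℕ} (S : Fin a → Fin b → TubalScalar p) (i : Fin a) :
    TubalScalar p :=
  if h : (i : ℕ) < b then S i ⟨(i : ℕ), h⟩ else 0

/-- A tubal matrix is f-diagonal if each of its frontal slices is a diagonal matrix,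
i.e. all entries off the (numeric) diagonal are the zero tubal scalar. -/
def fDiag {a b : ℕ} (S : Fin a → Fin b → TubalScalar p) : Prop :=
  ∀ (i : Fin a) (j : Fin b), (i : ℕ) ≠ (j : ℕ) → S i j = 0

section Helpers
open Matrix

variable {p : ℕ}

lemma L_map_eq_zero (L : TubalScalar p ≃ₗ[ℂ] TubalScalar p) (x : TubalScalar p) :
    L x = 0 ↔ x = 0 := L.map_eq_zero_iff

/-- entrywise application of `L` to a tubal matrix, as an ordinary matrix over the
commutative ring `Fin p → ℂ`. -/
noncomputable def hat {p : ℕ} (L : TubalScalar p ≃ₗ[ℂ] TubalScalar p) {ι κ : Type*}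
    (A : ι → κ → TubalScalar p) : Matrix ι κ (TubalScalar p) :=
  Matrix.of fun i j => L (A i j)

lemma hat_apply (L : TubalScalar p ≃ₗ[ℂ] TubalScalar p) {ι κ : Type*}
    (A : ι → κ → TubalScalar p) (i : ι) (j : κ) : hat L A i j = L (A i j) := rfl

lemma hat_tMul (L : TubalScalar p ≃ₗ[ℂ] TubalScalar p) {ι κ τ : Type*} [Fintype κ]
    (A : ι → κ → TubalScalar p) (B : κ → τ → TubalScalar p) :
    hat L (tMul L A B) = hat L A * hat L B := by
  ext i k
  simp [hat, tMul, tmul, map_sum, Matrix.mul_apply]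

lemma hat_tHerm (L : TubalScalar p ≃ₗ[ℂ] TubalScalar p) {ι κ : Type*}
    (A : ι → κ → TubalScalar p) : hat L (tHerm L A) = (hat L A)ᴴ := by
  ext i k
  simp [hat, tHerm, Matrix.conjTranspose_apply]

lemma hat_tId (L : TubalScalar p ≃ₗ[ℂ] TubalScalar p) {ι : Type*} [DecidableEq ι] :
    hat L (tId L (I := ι)) = 1 := by
  ext i k
  simp [hat, tId, Matrix.one_apply, apply_ite]

lemma hat_unitary (L : TubalScalar p ≃ₗ[ℂ] TubalScalar p) {ι : Type*}
    [Fintype ι] [DecidableEq ι] {A : ι → ι → TubalScalar p} (h : tUnitary L A) :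
    hat L A * (hat L A)ᴴ = 1 ∧ (hat L A)ᴴ * hat L A = 1 := by
  constructor
  · rw [← hat_tHerm, ← hat_tMul, h.1, hat_tId]
  · rw [← hat_tHerm, ← hat_tMul, h.2, hat_tId]

lemma insertAt_self {N : ℕ} {I : Fin N → ℕ} (n : Fin N) (a : Fin (I n)) (c : Cidx I n) :
    insertAt n a c n = a := by
  simp [insertAt, Fin.ext_iff]

lemma insertAt_ne {N : ℕ} {I : Fin N → ℕ} (n : Fin N) (a : Fin (I n)) (c : Cidx I n)
    (m : Fin N) (h : m ≠ n) : insertAt n a c m = c ⟨m, h⟩ := by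
  simp [insertAt, h]

/-- splitting a full multi-index into its `n`-th component and the rest. -/
def insertEquiv {N : ℕ} (I : Fin N → ℕ) (n : Fin N) :
    (Fin (I n) × Cidx I n) ≃ ((m : Fin N) → Fin (I m)) where
  toFun bd := insertAt n bd.1 bd.2
  invFun j := (j n, fun m => j m.1)
  left_inv := by
    rintro ⟨b, d⟩
    refine Prod.ext (insertAt_self ..) ?_
    funext m
    exact insertAt_ne n b d m.1 m.2
  right_inv := by
    intro j
    funext m
    by_cases h : m = n
    · subst h; exact insertAt_self ..
    · exact insertAt_ne _ _ _ m h

lemma mul_submatrix_id {α l m n n' : Type*} [Fintype m] [NonUnitalNonAssocSemiring α]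
    (X : Matrix l m α) (Y : Matrix m n α) (f : n' → n) :
    X * Y.submatrix id f = (X * Y).submatrix id f := by
  ext i j
  simp [Matrix.mul_apply, Matrix.submatrix_apply]

end Helpers

open Matrix in
theorem mode_t_rank_via_core {N : ℕ} (L : TubalScalar p ≃ₗ[ℂ] TubalScalar p)
    (I : Fin N → ℕ) (A : ((m : Fin N) → Fin (I m)) → TubalScalar p)
    (M : Fin N → ℕ) (e : (n : Fin N) → Cidx I n ≃ Fin (M n))
    (U : (n : Fin N) → Fin (I n) → Fin (I n) → TubalScalar p)
    (Sig : (n : Fin N) → Fin (I n) → Fin (M n) → TubalScalar p)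
    (V : (n : Fin N) → Fin (M n) → Fin (M n) → TubalScalar p)
    (hU : ∀ n, tUnitary L (U n)) (hV : ∀ n, tUnitary L (V n))
    (hdiag : ∀ n, fDiag (Sig n))
    (hfact : ∀ n, (fun i j => unfold I A n i ((e n).symm j))
        = tMul L (U n) (tMul L (Sig n) (tHerm L (V n)))) :
    ∀ n : Fin N,
      Nat.card {i : Fin (I n) // sdiag (Sig n) i ≠ 0}
        = Nat.card {a : Fin (I n) //
            ∃ c : Cidx I n,
              multiProd L I I A (fun m => tHerm L (U m)) (insertAt n a c) ≠ 0} := by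
  intro n
  classical
  -- hatted matrices over the commutative ring `Fin p → ℂ`
  let Ah : Matrix (Fin (I n)) (Cidx I n) (TubalScalar p) :=
    Matrix.of fun b d => L (A (insertAt n b d))
  let W : Matrix (Cidx I n) (Cidx I n) (TubalScalar p) :=
    Matrix.of fun d c => ∏ m : {m : Fin N // m ≠ n}, star (L (U m.1 (d m) (c m)))
  let Sh : Matrix (Fin (I n)) (Cidx I n) (TubalScalar p) :=
    Matrix.of fun a c => L (multiProd L I I A (fun m => tHerm L (U m)) (insertAt n a c))
  let Vs : Matrix (Fin (M n)) (Cidx I n) (TubalScalar p) :=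
    Matrix.submatrix ((hat L (V n))ᴴ) id (e n)
  let Q : Matrix (Fin (M n)) (Cidx I n) (TubalScalar p) := Vs * W
  have hins : ∀ (b : Fin (I n)) (d : Cidx I n) (m : {m : Fin N // m ≠ n}),
      insertAt n b d m.1 = d m := fun b d m => insertAt_ne n b d m.1 m.2
  -- Step 1 : Sh = Uᴴ * Ah * W
  have hSh : Sh = (hat L (U n))ᴴ * Ah * W := by
    refine Matrix.ext fun a c => ?_
    show L (multiProd L I I A (fun m => tHerm L (U m)) (insertAt n a c)) = _
    rw [multiProd, map_sum]
    simp only [LinearEquiv.apply_symm_apply]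
    rw [← Equiv.sum_comp (insertEquiv I n)]
    rw [Fintype.sum_prod_type]
    have hterm : ∀ (b : Fin (I n)) (d : Cidx I n),
        (L (A ((insertEquiv I n) (b, d))) *
          ∏ m, L (tHerm L (U m) (insertAt n a c m) ((insertEquiv I n) (b, d) m)))
        = Ah b d * (star (L (U n b a)) * W d c) := by
      intro b d
      have h1 : ((insertEquiv I n) (b, d) : (m : Fin N) → Fin (I m)) = insertAt n b d := rfl
      rw [h1]
      have hprod : (∏ m, L (tHerm L (U m) (insertAt n a c m) (insertAt n b d m)))
          = star (L (U n b a)) * W d c := by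
        rw [Fintype.prod_eq_mul_prod_compl n]
        have h2 : ∀ m : Fin N, m ∈ ({n}ᶜ : Finset (Fin N)) ↔ m ≠ n := by simp
        rw [Finset.prod_subtype _ h2
          (fun m => L (tHerm L (U m) (insertAt n a c m) (insertAt n b d m)))]
        congr 1
        · rw [insertAt_self, insertAt_self]
          simp [tHerm]
        · exact Finset.prod_congr rfl fun m _ => by
            rw [hins a c m, hins b d m]; simp [tHerm]
      rw [hprod]
      rfl
    simp only [hterm]
    simp only [Matrix.mul_apply, Matrix.conjTranspose_apply, hat_apply]
    rw [Finset.sum_comm]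
    refine Finset.sum_congr rfl fun d _ => ?_
    rw [Finset.sum_mul]
    exact Finset.sum_congr rfl fun b _ => by show _ = _ * Ah b d * W d c; ring
  -- Step 2 : Ah = (U * Sig * Vᴴ) reindexed by e n
  have hAh : Ah = (hat L (U n) * (hat L (Sig n) * (hat L (V n))ᴴ)).submatrix id (e n) := by
    refine Matrix.ext fun b d => ?_
    have h := congrFun (congrFun (hfact n) b) (e n d)
    rw [Equiv.symm_apply_apply] at h
    have h2 := congrArg L h
    calc Ah b d = L (unfold I A n b d) := rfl
      _ = L (tMul L (U n) (tMul L (Sig n) (tHerm L (V n))) b (e n d)) := h2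
      _ = (hat L (U n) * (hat L (Sig n) * (hat L (V n))ᴴ)) b (e n d) := by
          rw [← hat_tHerm, ← hat_tMul, ← hat_tMul]; rfl
      _ = _ := rfl
  -- Step 3 : W is unitary
  have hW : W * Wᴴ = 1 := by
    refine Matrix.ext fun d d' => ?_
    rw [Matrix.mul_apply]
    have hterm : ∀ c : Cidx I n, W d c * Wᴴ c d'
        = ∏ m : {m : Fin N // m ≠ n},
            (star (L (U m.1 (d m) (c m))) * L (U m.1 (d' m) (c m))) := by
      intro c
      show (∏ m : {m : Fin N // m ≠ n}, star (L (U m.1 (d m) (c m))))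
          * star (∏ m : {m : Fin N // m ≠ n}, star (L (U m.1 (d' m) (c m)))) = _
      rw [star_prod, ← Finset.prod_mul_distrib]
      exact Finset.prod_congr rfl fun m _ => by rw [star_star]
    simp only [hterm]
    rw [← Fintype.prod_sum fun (m : {m : Fin N // m ≠ n}) (k : Fin (I m.1)) =>
      star (L (U m.1 (d m) k)) * L (U m.1 (d' m) k)]
    have hfac : ∀ (m : {m : Fin N // m ≠ n}),
        (∑ k : Fin (I m.1), star (L (U m.1 (d m) k)) * L (U m.1 (d' m) k))
          = if d' m = d m then 1 else 0 := by
      intro m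
      have h1 := (hat_unitary L (hU m.1)).1
      have h2 : (hat L (U m.1) * (hat L (U m.1))ᴴ) (d' m) (d m)
          = (1 : Matrix (Fin (I m.1)) (Fin (I m.1)) (TubalScalar p)) (d' m) (d m) := by
        rw [h1]
      rw [Matrix.mul_apply, Matrix.one_apply] at h2
      rw [← h2]
      exact Finset.sum_congr rfl fun k _ => by
        rw [Matrix.conjTranspose_apply, hat_apply, hat_apply]; ring
    simp only [hfac]
    by_cases hd : d = d'
    · subst hd
      simp [Matrix.one_apply]
    · have hex : ∃ m : {m : Fin N // m ≠ n}, d' m ≠ d m := by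
        by_contra hc
        push_neg at hc
        exact hd (funext fun m => (hc m).symm)
      obtain ⟨m, hm⟩ := hex
      rw [Matrix.one_apply_ne hd]
      exact Finset.prod_eq_zero (Finset.mem_univ m) (if_neg hm)
  -- Step 4 : Vs is (co)isometric
  have hVs : Vs * Vsᴴ = 1 := by
    have h1 := (hat_unitary L (hV n)).2
    refine Matrix.ext fun j j' => ?_
    rw [Matrix.mul_apply]
    have hterm : ∀ c : Cidx I n, Vs j c * Vsᴴ c j'
        = (fun k => (hat L (V n))ᴴ j k * hat L (V n) k j') (e n c) := by
      intro c
      show (hat L (V n))ᴴ j (e n c) * star ((hat L (V n))ᴴ j' (e n c)) = _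
      simp only [Matrix.conjTranspose_apply, star_star]
    simp only [hterm]
    rw [Equiv.sum_comp (e n) (fun k => (hat L (V n))ᴴ j k * hat L (V n) k j')]
    have h2 : ((hat L (V n))ᴴ * hat L (V n)) j j'
        = (1 : Matrix (Fin (M n)) (Fin (M n)) (TubalScalar p)) j j' := by rw [h1]
    rw [Matrix.mul_apply] at h2
    exact h2
  have hQQ : Q * Qᴴ = 1 := by
    show (Vs * W) * (Vs * W)ᴴ = 1
    rw [Matrix.conjTranspose_mul, Matrix.mul_assoc, ← Matrix.mul_assoc W, hW,
      Matrix.one_mul, hVs]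
  -- Step 5 : Sh = Sig * Q
  have hShQ : Sh = hat L (Sig n) * Q := by
    rw [hSh, hAh, mul_submatrix_id, ← Matrix.mul_assoc ((hat L (U n))ᴴ),
      (hat_unitary L (hU n)).2, Matrix.one_mul, ← mul_submatrix_id (hat L (Sig n)),
      Matrix.mul_assoc]
  -- Step 6 : rows correspond
  have hrow : ∀ a : Fin (I n), (∀ j, hat L (Sig n) a j = 0) ↔ (∀ c, Sh a c = 0) := by
    intro a
    constructor
    · intro h c
      have h1 : Sh a c = (hat L (Sig n) * Q) a c := by rw [hShQ]
      rw [h1, Matrix.mul_apply]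
      exact Finset.sum_eq_zero fun j _ => by rw [h j, zero_mul]
    · intro h j
      have h2 : hat L (Sig n) = Sh * Qᴴ := by
        rw [hShQ, Matrix.mul_assoc, hQQ, Matrix.mul_one]
      have h3 : hat L (Sig n) a j = (Sh * Qᴴ) a j := by rw [h2]
      rw [h3, Matrix.mul_apply]
      exact Finset.sum_eq_zero fun c _ => by rw [h c, zero_mul]
  -- Step 7 : pointwise equivalence
  have key : ∀ a : Fin (I n),
      sdiag (Sig n) a ≠ 0 ↔
        ∃ c : Cidx I n,
          multiProd L I I A (fun m => tHerm L (U m)) (insertAt n a c) ≠ 0 := by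
    intro a
    have h1 : sdiag (Sig n) a = 0 ↔ ∀ j, Sig n a j = 0 := by
      constructor
      · intro h j
        by_cases hj : (a : ℕ) = (j : ℕ)
        · have hlt : (a : ℕ) < M n := hj ▸ j.isLt
          have hda : sdiag (Sig n) a = Sig n a ⟨(a : ℕ), hlt⟩ := dif_pos hlt
          have hje : j = ⟨(a : ℕ), hlt⟩ := Fin.ext hj.symm
          rw [hje, ← hda, h]
        · exact hdiag n a j hj
      · intro h
        unfold sdiag
        split
        · exact h _
        · rfl
    have h2 : (∀ j, Sig n a j = 0) ↔
        ∀ c : Cidx I n, multiProd L I I A (fun m => tHerm L (U m)) (insertAt n a c) = 0 := by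
      have e1 : (∀ j, Sig n a j = 0) ↔ (∀ j, hat L (Sig n) a j = 0) :=
        forall_congr' fun j => (L_map_eq_zero L _).symm
      have e2 : (∀ c, Sh a c = 0) ↔
          ∀ c : Cidx I n, multiProd L I I A (fun m => tHerm L (U m)) (insertAt n a c) = 0 :=
        forall_congr' fun c => L_map_eq_zero L _
      exact e1.trans ((hrow a).trans e2)
    rw [Ne, h1.trans h2, not_forall]
  exact Nat.card_congr (Equiv.subtypeEquivRight key)
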